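/- Every nonempty string P admits a unique factorization P = P_1 P_2 ... P_k into Lyndon words with P_1 >= P_2 >= ... >= P_k in lexicographic order. -/

import Mathlib

open List

variable {α : Type*} [LinearOrder α]

/-- A nonempty string is a Lyndon word if it is lexicographically strictly
smaller than every nonempty proper suffix. -/
def IsLyndon (w : List α) : Prop :=
  w ≠ [] ∧ ∀ u v : List α, w = u ++ v → u ≠ [] → v ≠ [] → w < v

lemma lt_append_left' (u : List α) {a b : List α} (h : a < b) : u ++ a < u ++ b := by
  induction u with
  | nil => exact h
  | cons x xs ih => exact List.Lex.cons ih

lemma lt_append_of_ne_nil' (u : List α) {w : List α} (hw : w ≠ []) : u < u ++ w := by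
  induction u with
  | nil =>
    cases w with
    | nil => exact absurd rfl hw
    | cons a l => exact List.Lex.nil
  | cons x xs ih => exact List.Lex.cons ih

lemma prefix_le' {u v : List α} (h : u <+: v) : u ≤ v := by
  obtain ⟨w, rfl⟩ := h
  rcases eq_or_ne w [] with rfl | hw
  · rw [append_nil]
  · exact le_of_lt (lt_append_of_ne_nil' u hw)

lemma append_lt_append' {u v : List α} (h : u < v) (hnp : ¬ u <+: v) (a b : List α) :
    u ++ a < v ++ b := by
  induction u generalizing v with
  | nil => exact absurd (nil_prefix) hnp
  | cons x xs ih =>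
    cases v with
    | nil => exact absurd h (by simp)
    | cons y ys =>
      have h' : List.Lex (· < ·) (x :: xs) (y :: ys) := h
      cases h' with
      | cons h'' =>
        have hnp' : ¬ xs <+: ys := fun hp => hnp (List.cons_prefix_cons.mpr ⟨rfl, hp⟩)
        exact List.Lex.cons (ih h'' hnp')
      | rel hxy => exact List.Lex.rel hxy

lemma IsLyndon.merge {u v : List α} (hu : IsLyndon u) (hv : IsLyndon v) (huv : u < v) :
    IsLyndon (u ++ v) := by
  have key : u ++ v < v := by
    by_cases hp : u <+: v
    · obtain ⟨w, rfl⟩ := hp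
      have hw : w ≠ [] := by rintro rfl; rw [append_nil] at huv; exact lt_irrefl u huv
      have h1 : u ++ w < w := hv.2 u w rfl hu.1 hw
      exact lt_append_left' u h1
    · have h2 := append_lt_append' huv hp v []
      rwa [append_nil] at h2
  refine ⟨by simp [hu.1], ?_⟩
  intro x y hxy hx hy
  rcases le_or_gt y.length v.length with hlen | hlen
  · have hux : u <+: x := by
      apply prefix_of_prefix_length_le ⟨v, rfl⟩ ⟨y, hxy.symm⟩
      have : u.length + v.length = x.length + y.length := by
        have := congrArg length hxy; simpa using this
      omega
    obtain ⟨x', rfl⟩ := hux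
    have hv' : v = x' ++ y := by
      rw [append_assoc] at hxy
      exact (List.append_cancel_left hxy)
    rcases eq_or_ne x' [] with rfl | hx'
    · simp at hv'; subst hv'; exact key
    · exact lt_trans key (hv.2 x' y hv' hx' hy)
  · have hxu : x <+: u := by
      apply prefix_of_prefix_length_le ⟨y, hxy.symm⟩ ⟨v, rfl⟩
      have : u.length + v.length = x.length + y.length := by
        have := congrArg length hxy; simpa using this
      omega
    obtain ⟨u'', rfl⟩ := hxu
    have hy' : y = u'' ++ v := by
      rw [append_assoc] at hxy
      exact (List.append_cancel_left hxy.symm)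
    have hu'' : u'' ≠ [] := by
      rintro rfl
      simp at hy'
      subst hy'
      simp at hlen
    have h3 : x ++ u'' < u'' := hu.2 x u'' rfl hx hu''
    have hnp : ¬ (x ++ u'') <+: u'' := by
      intro hp
      have h4 := hp.length_le
      have hx0 : x.length ≠ 0 := by simpa using hx
      have hu0 : u''.length ≠ 0 := by simpa using hu''
      rw [length_append] at h4
      omega
    rw [hy']
    exact append_lt_append' h3 hnp v v

lemma chain_head_ge {f : List α} {F : List (List α)}
    (h : Chain' (· ≥ ·) (f :: F)) : ∀ x ∈ F, x ≤ f := by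
  intro x hx
  have hp := (List.isChain_iff_pairwise).mp h
  exact (List.pairwise_cons.mp hp).1 x hx

lemma prefix_join_decomp : ∀ (F : List (List α)) (s : List α), s <+: F.flatten →
    (∃ A B, F = A ++ B ∧ s = A.flatten) ∨
    (∃ A b B t, F = A ++ b :: B ∧ t ≠ [] ∧ t <+: b ∧ s = A.flatten ++ t) := by
  intro F
  induction F with
  | nil =>
    intro s hs
    left
    simp only [flatten_nil, prefix_nil] at hs
    exact ⟨[], [], rfl, by simp [hs]⟩
  | cons f F' ih =>
    intro s hs
    simp only [flatten_cons] at hs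
    rcases prefix_or_prefix_of_prefix hs (prefix_append f F'.flatten) with hsf | hfs
    · rcases eq_or_ne s [] with rfl | hne
      · exact Or.inl ⟨[], f :: F', rfl, by simp⟩
      · exact Or.inr ⟨[], f, F', s, rfl, hne, hsf, by simp⟩
    · obtain ⟨s', rfl⟩ := hfs
      have hs' : s' <+: F'.flatten := by
        obtain ⟨w, hw⟩ := hs
        rw [append_assoc] at hw
        exact ⟨w, List.append_cancel_left hw⟩
      rcases ih s' hs' with ⟨A, B, hF, hsA⟩ | ⟨A, b, B, t, hF, ht, htb, hsA⟩
      · exact Or.inl ⟨f :: A, B, by rw [hF, cons_append], by simp [hsA]⟩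
      · exact Or.inr ⟨f :: A, b, B, t, by rw [hF, cons_append], ht, htb, by simp [hsA]⟩

lemma heads_eq {f g : List α} {F' G' : List (List α)}
    (hj : f ++ F'.flatten = g ++ G'.flatten)
    (hLF : ∀ x ∈ f :: F', IsLyndon x) (hCF : Chain' (· ≥ ·) (f :: F'))
    (hg : IsLyndon g) (hle : f.length ≤ g.length) : f = g := by
  have hf : IsLyndon f := hLF f (mem_cons_self)
  have hgp : g <+: f ++ F'.flatten := by rw [hj]; exact ⟨G'.flatten, rfl⟩
  have hfg : f <+: g := prefix_of_prefix_length_le ⟨F'.flatten, rfl⟩ hgp hle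
  rcases eq_or_lt_of_le hle with heq | hlt
  · exact hfg.eq_of_length heq
  · obtain ⟨r, rfl⟩ := hfg
    have hr : r ≠ [] := by
      rintro rfl; simp at hlt
    exfalso
    have hrj : r <+: F'.flatten := by
      obtain ⟨w, hw⟩ := hgp
      rw [append_assoc] at hw
      exact ⟨w, List.append_cancel_left hw⟩
    have hflt : f < f ++ r := lt_append_of_ne_nil' f hr
    rcases prefix_join_decomp F' r hrj with ⟨A, B, hF, hrA⟩ | ⟨A, b, B, t, hF, ht, htb, hrA⟩
    · have hA : A ≠ [] := by rintro rfl; simp at hrA; exact hr hrA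
      obtain ⟨A₀, a, rfl⟩ := A.eq_nil_or_concat.resolve_left hA
      have haF : a ∈ F' := by rw [hF]; simp
      have ha : a ≠ [] := (hLF a (mem_cons_of_mem _ haF)).1
      have hgsplit : f ++ r = (f ++ A₀.flatten) ++ a := by
        rw [hrA, append_assoc]
        simp
      have hglt : f ++ r < a :=
        hg.2 (f ++ A₀.flatten) a hgsplit (by simp [hf.1]) ha
      have hale : a ≤ f := chain_head_ge hCF a haF
      exact absurd (lt_trans (lt_of_lt_of_le hglt hale) hflt) (lt_irrefl _)
    · have hbF : b ∈ F' := by rw [hF]; simp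
      have hgsplit : f ++ r = (f ++ A.flatten) ++ t := by rw [hrA, append_assoc]
      have hglt : f ++ r < t := hg.2 (f ++ A.flatten) t hgsplit (by simp [hf.1]) ht
      have htle : t ≤ b := prefix_le' htb
      have hble : b ≤ f := chain_head_ge hCF b hbF
      exact absurd (lt_trans (lt_of_lt_of_le hglt (le_trans htle hble)) hflt) (lt_irrefl _)

lemma factorization_unique : ∀ (F G : List (List α)), F.flatten = G.flatten →
    (∀ f ∈ F, IsLyndon f) → Chain' (· ≥ ·) F →
    (∀ g ∈ G, IsLyndon g) → Chain' (· ≥ ·) G → F = G := by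
  intro F
  induction F with
  | nil =>
    intro G hj hLF _ hLG _
    cases G with
    | nil => rfl
    | cons g G' =>
      exfalso
      simp only [flatten_nil, flatten_cons] at hj
      have := (hLG g (mem_cons_self)).1
      rcases append_eq_nil_iff.mp hj.symm with ⟨h1, _⟩
      exact this h1
  | cons f F' ih =>
    intro G hj hLF hCF hLG hCG
    cases G with
    | nil =>
      exfalso
      simp only [flatten_nil, flatten_cons] at hj
      exact (hLF f (mem_cons_self)).1 (append_eq_nil_iff.mp hj).1
    | cons g G' =>
      simp only [flatten_cons] at hj
      have hfg : f = g := by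
        rcases le_total f.length g.length with h | h
        · exact heads_eq hj hLF hCF (hLG g (mem_cons_self)) h
        · exact (heads_eq hj.symm hLG hCG (hLF f (mem_cons_self)) h).symm
      subst hfg
      have hj' : F'.flatten = G'.flatten := List.append_cancel_left hj
      have := ih G' hj' (fun x hx => hLF x (mem_cons_of_mem _ hx)) (IsChain.tail hCF)
        (fun x hx => hLG x (mem_cons_of_mem _ hx)) (IsChain.tail hCG)
      rw [this]

lemma exists_factorization : ∀ (n : ℕ) (F : List (List α)), F.length ≤ n →
    (∀ f ∈ F, IsLyndon f) →
    ∃ G : List (List α), G.flatten = F.flatten ∧ G.length ≤ F.length ∧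
      (∀ g ∈ G, IsLyndon g) ∧ Chain' (· ≥ ·) G := by
  intro n
  induction n with
  | zero =>
    intro F hlen _
    have : F = [] := eq_nil_of_length_eq_zero (Nat.le_zero.mp hlen)
    subst this
    exact ⟨[], rfl, le_refl _, by simp, isChain_nil⟩
  | succ n ih =>
    intro F hlen hL
    match F with
    | [] => exact ⟨[], rfl, le_refl _, by simp, isChain_nil⟩
    | [f] => exact ⟨[f], rfl, le_refl _, hL, isChain_singleton _⟩
    | f1 :: f2 :: rest =>
      obtain ⟨G, hGj, hGlen, hGL, hGC⟩ := ih (f2 :: rest)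
        (by simp at hlen ⊢; omega) (fun x hx => hL x (mem_cons_of_mem _ hx))
      match G with
      | [] =>
        exfalso
        simp only [flatten_nil] at hGj
        exact (hL f2 (by simp)).1 (append_eq_nil_iff.mp hGj.symm).1
      | g :: G' =>
        by_cases hcmp : g ≤ f1
        · refine ⟨f1 :: g :: G', by simp only [flatten_cons] at hGj ⊢; rw [hGj], ?_, ?_, ?_⟩
          · simp at hGlen ⊢; omega
          · intro x hx
            rcases mem_cons.mp hx with rfl | hx'
            · exact hL x (by simp)
            · exact hGL x hx'
          · exact isChain_cons_cons.mpr ⟨hcmp, hGC⟩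
        · push_neg at hcmp
          have hmerge : IsLyndon (f1 ++ g) :=
            IsLyndon.merge (hL f1 (by simp)) (hGL g (mem_cons_self)) hcmp
          obtain ⟨H, hHj, hHlen, hHL, hHC⟩ := ih ((f1 ++ g) :: G')
            (by simp at hGlen hlen ⊢; omega)
            (by
              intro x hx
              rcases mem_cons.mp hx with rfl | hx'
              · exact hmerge
              · exact hGL x (mem_cons_of_mem _ hx'))
          refine ⟨H, ?_, ?_, hHL, hHC⟩
          · rw [hHj]
            simp only [flatten_cons] at hGj ⊢
            rw [append_assoc, hGj]
          · simp only [flatten_cons] at *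
            simp at hHlen hGlen ⊢
            omega

lemma isLyndon_singleton' (a : α) : IsLyndon ([a] : List α) := by
  refine ⟨by simp, ?_⟩
  intro u v huv hu hv
  exfalso
  cases u with
  | nil => exact hu rfl
  | cons x xs =>
    simp only [cons_append, cons.injEq] at huv
    exact hv (by rcases huv with ⟨_, h⟩; exact (append_eq_nil_iff.mp h.symm).2)

theorem stmt6 (P : List α) (hP : P ≠ []) :
    ∃! F : List (List α),
      P = F.flatten ∧ (∀ f ∈ F, IsLyndon f) ∧ F.Chain' (· ≥ ·) := by
  have hbase : (P.map (fun a => [a])).flatten = P := by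
    clear hP
    induction P with
    | nil => rfl
    | cons x xs ih => simp [ih]
  obtain ⟨G, hGj, _, hGL, hGC⟩ := exists_factorization (P.map (fun a => [a])).length
    (P.map (fun a => [a])) (le_refl _)
    (by
      intro f hf
      simp only [mem_map] at hf
      obtain ⟨a, _, rfl⟩ := hf
      exact isLyndon_singleton' a)
  refine ⟨G, ⟨by rw [hGj, hbase], hGL, hGC⟩, ?_⟩
  intro F ⟨hFj, hFL, hFC⟩
  exact factorization_unique F G (by rw [← hFj, hGj, hbase]) hFL hFC hGL hGC
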